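/- Let P ⊆ ℝ^d be a finite nonempty set that is covered by k balls of radius r, i.e., P ⊆ ⋃_{l=1}^{k} Ball(c_l, r) for some centers c_1, …, c_k ∈ ℝ^d. Let s_1, …, s_{k'} be a farthest-point (Gonzalez) sequence in P with k' ≥ k. Then P ⊆ ⋃_{j=1}^{k'} Ball(s_j, 2r); that is, every point of P is within distance 2r of some selected point. -/
import Mathlib


noncomputable section

open Metric

/-- `s 0, …, s (k-1)` is a farthest-point (Gonzalez) sequence in the finite set `P`:
all the points belong to `P`, and each `s i` (for `1 ≤ i < k`) maximizes, over `p ∈ P`,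
the distance `min_{j < i} ‖p - s j‖` to the previously selected points. -/
def IsGonzalezSeq {d : ℕ} (P : Finset (EuclideanSpace ℝ (Fin d))) (k : ℕ)
    (s : ℕ → EuclideanSpace ℝ (Fin d)) : Prop :=
  (∀ i < k, s i ∈ P) ∧
  ∀ i, 1 ≤ i → i < k → ∀ p ∈ P,
    (⨅ j : Fin i, ‖p - s j.1‖) ≤ ⨅ j : Fin i, ‖s i - s j.1‖

/-- If a finite nonempty set `P` is covered by `k` balls of radius `r`, then the points of
a Gonzalez sequence of length `k' ≥ k` in `P` cover `P` with balls of radius `2r`. -/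
theorem gonzalez_covers_with_double_radius
    {d : ℕ} (P : Finset (EuclideanSpace ℝ (Fin d))) (hP : P.Nonempty)
    (r : ℝ) (hr : 0 ≤ r) (k : ℕ) (c : Fin k → EuclideanSpace ℝ (Fin d))
    (hcov : ∀ p ∈ P, ∃ l : Fin k, p ∈ closedBall (c l) r)
    (k' : ℕ) (hk : k ≤ k') (s : ℕ → EuclideanSpace ℝ (Fin d))
    (hs : IsGonzalezSeq P k' s) :
    ∀ p ∈ P, ∃ j < k', p ∈ closedBall (s j) (2 * r) := by
  intro p hp
  by_contra hcon
  push_neg at hcon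
  have hfar : ∀ j < k', 2 * r < ‖p - s j‖ := by
    intro j hj
    have := hcon j hj
    rw [mem_closedBall, dist_eq_norm] at this
    exact lt_of_not_ge this
  have hbdd : ∀ (q : EuclideanSpace ℝ (Fin d)) (m : ℕ),
      BddBelow (Set.range fun l : Fin m => ‖q - s l.1‖) :=
    fun q m => ⟨0, by rintro x ⟨l, rfl⟩; exact norm_nonneg _⟩
  have hsfar : ∀ i j : ℕ, i < j → j < k' → 2 * r < ‖s j - s i‖ := by
    intro i j hij hjk
    have h1 : (⨅ l : Fin j, ‖p - s l.1‖) ≤ ⨅ l : Fin j, ‖s j - s l.1‖ :=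
      hs.2 j (by omega) hjk p hp
    have h2 : (⨅ l : Fin j, ‖s j - s l.1‖) ≤ ‖s j - s i‖ :=
      ciInf_le (hbdd _ _) ⟨i, hij⟩
    have h3 : 2 * r < ⨅ l : Fin j, ‖p - s l.1‖ := by
      haveI : Nonempty (Fin j) := ⟨⟨i, hij⟩⟩
      obtain ⟨l0, hl0⟩ := Finite.exists_min (fun l : Fin j => ‖p - s l.1‖)
      have heq : (⨅ l : Fin j, ‖p - s l.1‖) = ‖p - s l0.1‖ :=
        le_antisymm (ciInf_le (hbdd _ _) l0) (le_ciInf hl0)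
      rw [heq]
      exact hfar l0.1 (l0.2.trans hjk)
    linarith
  set f : Fin (k' + 1) → EuclideanSpace ℝ (Fin d) :=
    fun i => if (i : ℕ) < k' then s i else p with hf
  have hmem : ∀ i, f i ∈ P := by
    intro i; simp only [hf]
    split
    · exact hs.1 _ ‹_›
    · exact hp
  have hlt : ∀ i j : Fin (k' + 1), (i : ℕ) < (j : ℕ) → 2 * r < ‖f i - f j‖ := by
    intro i j hij
    have hik : (i : ℕ) < k' := by omega
    by_cases hjk : (j : ℕ) < k'
    · have := hsfar i j hij hjk
      simp only [hf, if_pos hik, if_pos hjk]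
      rwa [norm_sub_rev]
    · have := hfar i hik
      simp only [hf, if_pos hik, if_neg hjk]
      rwa [norm_sub_rev]
  have hne : ∀ i j : Fin (k' + 1), i ≠ j → 2 * r < ‖f i - f j‖ := by
    intro i j hij
    rcases lt_trichotomy (i : ℕ) (j : ℕ) with h | h | h
    · exact hlt i j h
    · exact absurd (Fin.ext h) hij
    · rw [norm_sub_rev]; exact hlt j i h
  choose g hg using fun i => hcov (f i) (hmem i)
  have hcard : Fintype.card (Fin k) < Fintype.card (Fin (k' + 1)) := by
    simp only [Fintype.card_fin]; omega
  obtain ⟨i, j, hij, hgij⟩ := Fintype.exists_ne_map_eq_of_card_lt g hcard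
  have h1 := hg i
  have h2 := hg j
  rw [mem_closedBall] at h1 h2
  have hle : ‖f i - f j‖ ≤ 2 * r := by
    rw [← dist_eq_norm]
    calc dist (f i) (f j) ≤ dist (f i) (c (g i)) + dist (c (g i)) (f j) :=
          dist_triangle _ _ _
      _ ≤ r + r := by
          rw [hgij] at h1
          rw [hgij, dist_comm (c (g j)) (f j)]
          exact add_le_add h1 h2
      _ = 2 * r := by ring
  exact absurd hle (not_le.mpr (hne i j hij))
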